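/- Let G ⊆ S×T be a finite bipartite graph in which S has combinatorial dimension at most k ≥ 1 with constant b. Then G has at most C(k,b)·(|S| + |S|^{1−1/k}·|T|) edges. -/

import Mathlib

open Finset in
lemma powmean {ι : Type*} (A : Finset ι) (x : ι → ℝ) (hx : ∀ i ∈ A, 0 ≤ x i)
    {θ : ℝ} (h0 : 0 ≤ θ) (h1 : θ ≤ 1) :
    ∑ i ∈ A, x i ^ θ ≤ (A.card : ℝ) ^ (1 - θ) * (∑ i ∈ A, x i) ^ θ := by
  rcases A.eq_empty_or_nonempty with rfl | hA
  · simp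
    positivity
  have hn : (0:ℝ) < A.card := by exact_mod_cast Finset.card_pos.mpr hA
  rcases eq_or_lt_of_le h0 with rfl | hθ
  · simp only [Real.rpow_zero, sum_const, nsmul_eq_mul, mul_one, sub_zero, Real.rpow_one, le_refl]
  · have hp : 1 ≤ 1/θ := by rw [le_div_iff₀ hθ]; linarith
    have key := Real.arith_mean_le_rpow_mean A (fun _ => 1/(A.card:ℝ)) (fun i => x i ^ θ)
      (fun i _ => by positivity) (by rw [Finset.sum_const, nsmul_eq_mul]; exact mul_one_div_cancel hn.ne') (fun i hi => Real.rpow_nonneg (hx i hi) θ) hp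
    have e1 : ∀ i ∈ A, (1/(A.card:ℝ)) * (x i ^ θ)^(1/θ) = (1/(A.card:ℝ)) * x i := by
      intro i hi
      rw [← Real.rpow_mul (hx i hi), mul_one_div_cancel hθ.ne', Real.rpow_one]
    simp only [one_div_one_div] at key
    rw [Finset.sum_congr rfl e1, ← Finset.mul_sum, ← Finset.mul_sum] at key
    have hsx : 0 ≤ ∑ i ∈ A, x i := Finset.sum_nonneg hx
    rw [Real.mul_rpow (by positivity) hsx] at key
    calc ∑ i ∈ A, x i ^ θ = (A.card:ℝ) * ((1/(A.card:ℝ)) * ∑ i ∈ A, x i ^ θ) := by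
          field_simp
      _ ≤ (A.card:ℝ) * ((1/(A.card:ℝ))^θ * (∑ i ∈ A, x i)^θ) :=
          mul_le_mul_of_nonneg_left key hn.le
      _ = (A.card:ℝ)^(1-θ) * (∑ i ∈ A, x i)^θ := by
          rw [one_div, Real.inv_rpow hn.le, Real.rpow_sub hn, Real.rpow_one]
          ring

variable {α β : Type} [DecidableEq α] [DecidableEq β]

lemma card_as_sum (S : Finset α) (T : Finset β) (G : Finset (α × β)) (hG : G ⊆ S ×ˢ T) :
    G.card = ∑ t ∈ T, (S.filter fun s => (s, t) ∈ G).card := by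
  have hGe : G = (S ×ˢ T).filter (· ∈ G) := by
    ext p
    simp only [Finset.mem_filter]
    exact ⟨fun h => ⟨hG h, h⟩, fun h => h.2⟩
  conv_lhs => rw [hGe]
  rw [Finset.card_filter, Finset.sum_product]
  rw [Finset.sum_comm]
  simp only [Finset.card_filter]

lemma sum_deg_eq (S : Finset α) (T' : Finset β) (G : Finset (α × β)) :
    ∑ s ∈ S, (T'.filter fun t => (s, t) ∈ G).card
      = ∑ t ∈ T', (S.filter fun s => (s, t) ∈ G).card := by
  simp only [Finset.card_filter]
  exact Finset.sum_comm

lemma restrict_card (S : Finset α) (T' : Finset β) (G : Finset (α × β)) (t : β) (ht : t ∈ T') :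
    (G.filter fun p => p.1 ∈ S ∧ (p.1, t) ∈ G ∧ p.2 ∈ T'.erase t).card
      = ∑ s ∈ S.filter (fun s => (s, t) ∈ G),
          ((T'.filter fun t' => (s, t') ∈ G).card - 1) := by
  have h1 : G.filter (fun p => p.1 ∈ S ∧ (p.1, t) ∈ G ∧ p.2 ∈ T'.erase t)
      = ((S.filter fun s => (s, t) ∈ G) ×ˢ T'.erase t).filter (· ∈ G) := by
    ext p
    simp only [Finset.mem_filter, Finset.mem_product]
    tauto
  rw [h1, Finset.card_filter, Finset.sum_product]
  refine Finset.sum_congr rfl fun s hs => ?_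
  rw [← Finset.card_filter, Finset.filter_erase, Finset.card_erase_of_mem]
  rw [Finset.mem_filter] at hs
  rw [Finset.mem_filter]
  exact ⟨ht, hs.2⟩

lemma swap_count (S : Finset α) (T' : Finset β) (G : Finset (α × β)) (f : α → ℕ) :
    ∑ t ∈ T', ∑ s ∈ S.filter (fun s => (s, t) ∈ G), f s
      = ∑ s ∈ S, (T'.filter fun t => (s, t) ∈ G).card * f s := by
  simp only [Finset.sum_filter]
  rw [Finset.sum_comm]
  refine Finset.sum_congr rfl fun s hs => ?_
  rw [Finset.card_filter, Finset.sum_mul]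
  refine Finset.sum_congr rfl fun t ht => ?_
  by_cases h : (s, t) ∈ G <;> simp [h]

lemma triple_count (S : Finset α) (T' : Finset β) (G : Finset (α × β)) :
    ∑ t ∈ T', (G.filter fun p => p.1 ∈ S ∧ (p.1, t) ∈ G ∧ p.2 ∈ T'.erase t).card
      + ∑ t ∈ T', (S.filter fun s => (s, t) ∈ G).card
    = ∑ s ∈ S, (T'.filter fun t => (s, t) ∈ G).card
        * (T'.filter fun t => (s, t) ∈ G).card := by
  rw [Finset.sum_congr rfl (fun t ht => restrict_card S T' G t ht),
      swap_count S T' G (fun s => (T'.filter fun t => (s, t) ∈ G).card - 1),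
      ← sum_deg_eq S T' G, ← Finset.sum_add_distrib]
  refine Finset.sum_congr rfl fun s _ => ?_
  cases h : (T'.filter fun t => (s, t) ∈ G).card with
  | zero => simp
  | succ m => simp only [Nat.succ_sub_one]; ring
/-- `S` has combinatorial dimension at most `k` (with constant `b`) in the
bipartite graph `G ⊆ S × T`. -/
def HasCombDim {α β : Type} [DecidableEq α] [DecidableEq β] (b : ℕ) :
    ℕ → Finset α → Finset β → Finset (α × β) → Prop
  | 0, S, _, _ => S.card ≤ b
  | k + 1, S, T, G => ∃ T' ⊆ T, (T \ T').card ≤ b ∧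
      ∀ t ∈ T', HasCombDim b k (S.filter (fun s => (s, t) ∈ G)) (T'.erase t)
        (G.filter (fun p => p.1 ∈ S ∧ (p.1, t) ∈ G ∧ p.2 ∈ T'.erase t))


lemma inductive_step {α β : Type} [DecidableEq α] [DecidableEq β]
    (b k : ℕ) (hk : 1 ≤ k) (C : ℝ) (hC1 : 1 ≤ C)
    (IH : ∀ (S : Finset α) (T : Finset β) (G : Finset (α × β)), G ⊆ S ×ˢ T →
      HasCombDim b k S T G →
      (G.card : ℝ) ≤ C * ((S.card : ℝ) + (S.card : ℝ) ^ (1 - 1/(k : ℝ)) * T.card))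
    (S : Finset α) (T : Finset β) (G : Finset (α × β)) (hG : G ⊆ S ×ˢ T)
    (hdim : HasCombDim b (k+1) S T G) :
    (G.card : ℝ) ≤ ((b : ℝ) + 2*C + 2) *
      ((S.card : ℝ) + (S.card : ℝ) ^ (1 - 1/((k : ℝ)+1)) * (T.card : ℝ)) := by
  obtain ⟨T', hT'T, hTb, hrec⟩ := hdim
  have hC0 : (0:ℝ) < C := lt_of_lt_of_le one_pos hC1
  have hb0 : (0:ℝ) ≤ (b:ℝ) := Nat.cast_nonneg b
  have hk1 : (1:ℝ) ≤ (k:ℝ) := by exact_mod_cast hk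
  have hθ0 : (0:ℝ) ≤ 1 - 1/(k:ℝ) := by
    have : 1/(k:ℝ) ≤ 1 := by rw [div_le_one (by linarith)]; linarith
    linarith
  have hθ1 : 1 - 1/(k:ℝ) ≤ 1 := by
    have : (0:ℝ) ≤ 1/(k:ℝ) := by positivity
    linarith
  have hμ0 : (0:ℝ) ≤ 1 - 1/((k:ℝ)+1) := by
    have : 1/((k:ℝ)+1) ≤ 1 := by rw [div_le_one (by linarith)]; linarith
    linarith
  have hμ1 : 1 - 1/((k:ℝ)+1) ≤ 1 := by
    have : (0:ℝ) ≤ 1/((k:ℝ)+1) := by positivity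
    linarith
  have hS0 : (0:ℝ) ≤ (S.card:ℝ) := Nat.cast_nonneg _
  have hSpow0 : (0:ℝ) ≤ (S.card:ℝ) ^ (1 - 1/((k:ℝ)+1)) * (T.card:ℝ) := by positivity
  -- Step 1: split off edges outside T'
  have hstep1 : G.card ≤ b * S.card + ∑ t ∈ T', (S.filter fun s => (s, t) ∈ G).card := by
    rw [card_as_sum S T G hG,
        ← Finset.sum_sdiff (f := fun t => (S.filter fun s => (s, t) ∈ G).card) hT'T]
    have h2 : ∑ t ∈ T \ T', (S.filter fun s => (s, t) ∈ G).card ≤ b * S.card :=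
      calc ∑ t ∈ T \ T', (S.filter fun s => (s, t) ∈ G).card
          ≤ ∑ _t ∈ T \ T', S.card := Finset.sum_le_sum fun t _ => Finset.card_filter_le _ _
        _ = (T \ T').card * S.card := by rw [Finset.sum_const, smul_eq_mul]
        _ ≤ b * S.card := Nat.mul_le_mul_right _ hTb
    omega
  by_cases hGzero : G.card = 0
  · rw [hGzero]
    have : (0:ℝ) ≤ ((b:ℝ) + 2*C + 2) *
        ((S.card : ℝ) + (S.card : ℝ) ^ (1 - 1/((k:ℝ)+1)) * (T.card : ℝ)) := by
      apply mul_nonneg (by linarith)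
      linarith
    exact_mod_cast this
  have hGpos := Nat.pos_of_ne_zero hGzero
  obtain ⟨p, hp⟩ := Finset.card_pos.mp hGpos
  have hpST := Finset.mem_product.mp (hG hp)
  have hS1 : (1:ℝ) ≤ (S.card:ℝ) := by
    exact_mod_cast Finset.card_pos.mpr ⟨p.1, hpST.1⟩
  have hT1 : (1:ℝ) ≤ (T.card:ℝ) := by
    exact_mod_cast Finset.card_pos.mpr ⟨p.2, hpST.2⟩
  have hGE : (G.card:ℝ) ≤ (b:ℝ) * (S.card:ℝ)
      + ∑ t ∈ T', ((S.filter fun s => (s, t) ∈ G).card : ℝ) := by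
    exact_mod_cast hstep1
  by_cases he0 : (∑ t ∈ T', (S.filter fun s => (s, t) ∈ G).card) = 0
  · have he0' : ∑ t ∈ T', ((S.filter fun s => (s, t) ∈ G).card : ℝ) = 0 := by
      exact_mod_cast he0
    rw [he0'] at hGE
    nlinarith only [hGE, hSpow0, hS1, mul_nonneg hC0.le hS0, mul_nonneg hb0 hSpow0,
      mul_nonneg hC0.le hSpow0]
  have he1 : (1:ℝ) ≤ ∑ t ∈ T', ((S.filter fun s => (s, t) ∈ G).card : ℝ) := by
    have : 1 ≤ ∑ t ∈ T', (S.filter fun s => (s, t) ∈ G).card :=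
      Nat.one_le_iff_ne_zero.mpr he0
    exact_mod_cast this
  set E : ℝ := ∑ t ∈ T', ((S.filter fun s => (s, t) ∈ G).card : ℝ) with hE
  set NR : ℝ := ∑ t ∈ T',
      ((G.filter fun p => p.1 ∈ S ∧ (p.1, t) ∈ G ∧ p.2 ∈ T'.erase t).card : ℝ) with hNR
  have hE0 : (0:ℝ) ≤ E := by linarith
  have hEpos : (0:ℝ) < E := by linarith
  -- Cauchy-Schwarz
  have hdsum : ∑ s ∈ S, ((T'.filter fun t => (s, t) ∈ G).card : ℝ) = E := by
    rw [hE]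
    exact_mod_cast sum_deg_eq S T' G
  have htriple : ∑ s ∈ S, ((T'.filter fun t => (s, t) ∈ G).card : ℝ) ^ 2 = NR + E := by
    have h := triple_count S T' G
    have h2 : ∑ s ∈ S, ((T'.filter fun t => (s, t) ∈ G).card : ℝ)
        * ((T'.filter fun t => (s, t) ∈ G).card : ℝ) = NR + E := by
      rw [hNR, hE]
      exact_mod_cast h.symm
    rw [← h2]
    exact Finset.sum_congr rfl fun s _ => pow_two _
  have hsq : E ^ 2 ≤ (S.card:ℝ) * (NR + E) := by
    calc E ^ 2 = (∑ s ∈ S, ((T'.filter fun t => (s, t) ∈ G).card : ℝ)) ^ 2 := by rw [hdsum]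
      _ ≤ (S.card:ℝ) * ∑ s ∈ S, ((T'.filter fun t => (s, t) ∈ G).card : ℝ) ^ 2 :=
          sq_sum_le_card_mul_sum_sq
      _ = (S.card:ℝ) * (NR + E) := by rw [htriple]
  -- apply IH to each restricted graph
  have hrest : ∀ t ∈ T',
      ((G.filter fun p => p.1 ∈ S ∧ (p.1, t) ∈ G ∧ p.2 ∈ T'.erase t).card : ℝ)
      ≤ C * (((S.filter fun s => (s, t) ∈ G).card : ℝ)
          + ((S.filter fun s => (s, t) ∈ G).card : ℝ) ^ (1 - 1/(k:ℝ)) * (T.card : ℝ)) := by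
    intro t ht
    have hsub : (G.filter fun p => p.1 ∈ S ∧ (p.1, t) ∈ G ∧ p.2 ∈ T'.erase t)
        ⊆ (S.filter fun s => (s, t) ∈ G) ×ˢ T'.erase t := by
      intro q hq
      rw [Finset.mem_filter] at hq
      rw [Finset.mem_product, Finset.mem_filter]
      exact ⟨⟨hq.2.1, hq.2.2.1⟩, hq.2.2.2⟩
    have h1 := IH _ _ _ hsub (hrec t ht)
    refine h1.trans ?_
    have hTle : ((T'.erase t).card : ℝ) ≤ (T.card : ℝ) := by
      exact_mod_cast Finset.card_le_card ((Finset.erase_subset _ _).trans hT'T)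
    apply mul_le_mul_of_nonneg_left _ hC0.le
    apply add_le_add le_rfl
    exact mul_le_mul_of_nonneg_left hTle (by positivity)
  have hN : NR ≤ C * (E + (∑ t ∈ T',
      ((S.filter fun s => (s, t) ∈ G).card : ℝ) ^ (1 - 1/(k:ℝ))) * (T.card:ℝ)) := by
    rw [hNR]
    calc ∑ t ∈ T',
        ((G.filter fun p => p.1 ∈ S ∧ (p.1, t) ∈ G ∧ p.2 ∈ T'.erase t).card : ℝ)
        ≤ ∑ t ∈ T', C * (((S.filter fun s => (s, t) ∈ G).card : ℝ)
          + ((S.filter fun s => (s, t) ∈ G).card : ℝ) ^ (1 - 1/(k:ℝ)) * (T.card : ℝ)) :=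
          Finset.sum_le_sum hrest
      _ = C * (E + (∑ t ∈ T',
          ((S.filter fun s => (s, t) ∈ G).card : ℝ) ^ (1 - 1/(k:ℝ))) * (T.card:ℝ)) := by
          rw [← Finset.mul_sum, Finset.sum_add_distrib, ← Finset.sum_mul, ← hE]
  -- power mean
  have hpm : ∑ t ∈ T', ((S.filter fun s => (s, t) ∈ G).card : ℝ) ^ (1 - 1/(k:ℝ))
      ≤ (T.card:ℝ) ^ (1 - (1 - 1/(k:ℝ))) * E ^ (1 - 1/(k:ℝ)) := by
    refine (powmean T' _ (fun t _ => by positivity) hθ0 hθ1).trans ?_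
    rw [← hE]
    have hle : ((T'.card:ℝ)) ≤ (T.card:ℝ) := by
      exact_mod_cast Finset.card_le_card hT'T
    have h1 : ((T'.card:ℝ)) ^ (1 - (1 - 1/(k:ℝ))) ≤ (T.card:ℝ) ^ (1 - (1 - 1/(k:ℝ))) :=
      Real.rpow_le_rpow (by positivity) hle (by linarith)
    exact mul_le_mul_of_nonneg_right h1 (Real.rpow_nonneg hE0 _)
  set Tp : ℝ := (T.card:ℝ) ^ (1 - (1 - 1/(k:ℝ))) * (T.card:ℝ) with hTpdef
  clear_value Tp
  have hTp0 : (0:ℝ) ≤ Tp := by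
    rw [hTpdef]; positivity
  have hkey : E ^ 2 ≤ (S.card:ℝ) * ((C+1) * E + C * Tp * E ^ (1 - 1/(k:ℝ))) := by
    refine hsq.trans (mul_le_mul_of_nonneg_left ?_ hS0)
    have h3 : NR ≤ C * E + C * Tp * E ^ (1 - 1/(k:ℝ)) := by
      refine hN.trans ?_
      have h4 : (∑ t ∈ T', ((S.filter fun s => (s, t) ∈ G).card : ℝ) ^ (1 - 1/(k:ℝ)))
          * (T.card:ℝ) ≤ Tp * E ^ (1 - 1/(k:ℝ)) := by
        rw [hTpdef]
        calc (∑ t ∈ T', ((S.filter fun s => (s, t) ∈ G).card : ℝ) ^ (1 - 1/(k:ℝ)))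
            * (T.card:ℝ)
            ≤ ((T.card:ℝ) ^ (1 - (1 - 1/(k:ℝ))) * E ^ (1 - 1/(k:ℝ))) * (T.card:ℝ) :=
              mul_le_mul_of_nonneg_right hpm (Nat.cast_nonneg _)
          _ = (T.card:ℝ) ^ (1 - (1 - 1/(k:ℝ))) * (T.card:ℝ) * E ^ (1 - 1/(k:ℝ)) := by ring
      calc C * (E + (∑ t ∈ T',
          ((S.filter fun s => (s, t) ∈ G).card : ℝ) ^ (1 - 1/(k:ℝ))) * (T.card:ℝ))
          ≤ C * (E + Tp * E ^ (1 - 1/(k:ℝ))) := by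
            apply mul_le_mul_of_nonneg_left _ hC0.le
            linarith
        _ = C * E + C * Tp * E ^ (1 - 1/(k:ℝ)) := by ring
    linarith
  -- final case analysis
  by_cases hcase : C * Tp * E ^ (1 - 1/(k:ℝ)) ≤ (C+1) * E
  · have hkey' := hkey
    rw [pow_two] at hkey'
    have h4 : E * E ≤ (2*(C+1)*(S.card:ℝ)) * E := by
      nlinarith only [hkey', hcase, hS0]
    have h5 : E ≤ 2*(C+1)*(S.card:ℝ) := le_of_mul_le_mul_right h4 hEpos
    nlinarith only [hGE, h5, hSpow0, hS1, mul_nonneg hb0 hSpow0,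
      mul_nonneg hC0.le hSpow0, mul_nonneg hC0.le hS0]
  · push_neg at hcase
    have h4 : E ^ 2 ≤ 2*C*(S.card:ℝ)*Tp*E ^ (1 - 1/(k:ℝ)) := by
      nlinarith only [hkey, hcase.le, hS0]
    have hEθpos : (0:ℝ) < E ^ (1 - 1/(k:ℝ)) := Real.rpow_pos_of_pos hEpos _
    have h5 : E ^ ((2:ℝ) - (1 - 1/(k:ℝ))) ≤ 2*C*(S.card:ℝ)*Tp := by
      have hsplit : E ^ ((2:ℝ) - (1 - 1/(k:ℝ))) * E ^ (1 - 1/(k:ℝ)) = E ^ 2 := by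
        rw [← Real.rpow_add hEpos,
          show ((2:ℝ) - (1 - 1/(k:ℝ))) + (1 - 1/(k:ℝ)) = ((2:ℕ):ℝ) by push_cast; ring,
          Real.rpow_natCast]
      refine le_of_mul_le_mul_right ?_ hEθpos
      rw [hsplit]
      exact h4
    have hμ : ((2:ℝ) - (1 - 1/(k:ℝ))) * (1 - 1/((k:ℝ)+1)) = 1 := by
      have hkne : (k:ℝ) ≠ 0 := by linarith
      have hkne1 : (k:ℝ) + 1 ≠ 0 := by linarith
      field_simp
      ring
    have h6 : E ≤ (2*C*(S.card:ℝ)*Tp) ^ (1 - 1/((k:ℝ)+1)) := by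
      have h7 := Real.rpow_le_rpow (Real.rpow_nonneg hE0 _) h5 hμ0
      rwa [← Real.rpow_mul hE0, hμ, Real.rpow_one] at h7
    have hT0 : (0:ℝ) ≤ (T.card:ℝ) := Nat.cast_nonneg _
    have hTpalt : Tp = (T.card:ℝ) ^ ((2:ℝ) - (1 - 1/(k:ℝ))) := by
      rw [hTpdef]
      nth_rewrite 2 [← Real.rpow_one (T.card:ℝ)]
      rw [← Real.rpow_add (by linarith only [hT1] : (0:ℝ) < (T.card:ℝ))]
      congr 1
      ring
    have h8 : (2*C*(S.card:ℝ)*Tp) ^ (1 - 1/((k:ℝ)+1))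
        ≤ 2*C*((S.card:ℝ) ^ (1 - 1/((k:ℝ)+1)) * (T.card:ℝ)) := by
      rw [hTpalt, show 2*C*(S.card:ℝ)*((T.card:ℝ) ^ ((2:ℝ) - (1 - 1/(k:ℝ))))
          = (2*C) * ((S.card:ℝ) * (T.card:ℝ) ^ ((2:ℝ) - (1 - 1/(k:ℝ)))) by ring,
        Real.mul_rpow (by linarith only [hC0]) (mul_nonneg hS0 (Real.rpow_nonneg hT0 _)),
        Real.mul_rpow hS0 (Real.rpow_nonneg hT0 _),
        ← Real.rpow_mul hT0, hμ, Real.rpow_one]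
      have h9 : (2*C) ^ (1 - 1/((k:ℝ)+1)) ≤ 2*C := by
        calc (2*C) ^ (1 - 1/((k:ℝ)+1)) ≤ (2*C) ^ (1:ℝ) :=
            Real.rpow_le_rpow_of_exponent_le (by linarith only [hC1]) hμ1
          _ = 2*C := Real.rpow_one _
      have h10 : (0:ℝ) ≤ (S.card:ℝ) ^ (1 - 1/((k:ℝ)+1)) * (T.card:ℝ) := hSpow0
      calc (2*C) ^ (1 - 1/((k:ℝ)+1)) * ((S.card:ℝ) ^ (1 - 1/((k:ℝ)+1)) * (T.card:ℝ))
          ≤ (2*C) * ((S.card:ℝ) ^ (1 - 1/((k:ℝ)+1)) * (T.card:ℝ)) :=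
            mul_le_mul_of_nonneg_right h9 h10
        _ = 2*C*((S.card:ℝ) ^ (1 - 1/((k:ℝ)+1)) * (T.card:ℝ)) := by ring
    have h11 := h6.trans h8
    linarith only [hGE, h11, hSpow0, hS1, mul_nonneg hb0 hSpow0,
      mul_nonneg hC0.le hS0, mul_nonneg hC0.le hSpow0]

/-- If `S` has combinatorial dimension at most `k ≥ 1` in `G ⊆ S × T`, then `G`
has at most `C(k,b)·(|S| + |S|^{1-1/k}·|T|)` edges. -/
theorem edge_bound_of_combDim (k b : ℕ) (hk : 1 ≤ k) :
    ∃ C : ℝ, 0 < C ∧ ∀ (α β : Type) [DecidableEq α] [DecidableEq β]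
      (S : Finset α) (T : Finset β) (G : Finset (α × β)),
      G ⊆ S ×ˢ T → HasCombDim b k S T G →
      (G.card : ℝ) ≤ C * ((S.card : ℝ) + (S.card : ℝ) ^ (1 - 1/(k : ℝ)) * T.card) := by
  clear hk
  induction k with
  | zero =>
    refine ⟨1, one_pos, ?_⟩
    intro α β _ _ S T G hG _
    have h1 : (G.card : ℝ) ≤ (S.card : ℝ) * (T.card : ℝ) := by
      exact_mod_cast (Finset.card_le_card hG).trans_eq (Finset.card_product S T)
    rw [show (1 : ℝ) - 1/((0:ℕ):ℝ) = 1 by norm_num, Real.rpow_one, one_mul]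
    have hS0 : (0:ℝ) ≤ (S.card:ℝ) := Nat.cast_nonneg _
    linarith only [h1, hS0]
  | succ k ih =>
    rcases Nat.eq_zero_or_pos k with rfl | hkpos
    · refine ⟨(b:ℝ) + 1, by positivity, ?_⟩
      intro α β _ _ S T G hG hdim
      obtain ⟨T', hT'T, hTb, hrec⟩ := hdim
      have h1 : ∑ t ∈ T', (S.filter fun s => (s, t) ∈ G).card ≤ b * T.card := by
        calc ∑ t ∈ T', (S.filter fun s => (s, t) ∈ G).card
            ≤ ∑ _t ∈ T', b := Finset.sum_le_sum fun t ht => hrec t ht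
          _ = T'.card * b := by rw [Finset.sum_const, smul_eq_mul]
          _ ≤ T.card * b := Nat.mul_le_mul_right _ (Finset.card_le_card hT'T)
          _ = b * T.card := Nat.mul_comm _ _
      have h2 : G.card ≤ b * S.card + b * T.card := by
        rw [card_as_sum S T G hG,
          ← Finset.sum_sdiff (f := fun t => (S.filter fun s => (s, t) ∈ G).card) hT'T]
        have h3 : ∑ t ∈ T \ T', (S.filter fun s => (s, t) ∈ G).card ≤ b * S.card :=
          calc ∑ t ∈ T \ T', (S.filter fun s => (s, t) ∈ G).card
              ≤ ∑ _t ∈ T \ T', S.card :=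
                Finset.sum_le_sum fun t _ => Finset.card_filter_le _ _
            _ = (T \ T').card * S.card := by rw [Finset.sum_const, smul_eq_mul]
            _ ≤ b * S.card := Nat.mul_le_mul_right _ hTb
        omega
      have h2' : (G.card : ℝ) ≤ (b:ℝ) * (S.card:ℝ) + (b:ℝ) * (T.card:ℝ) := by
        exact_mod_cast h2
      rw [show (S.card:ℝ) ^ ((1:ℝ) - 1/((0+1:ℕ):ℝ)) = 1 by norm_num, one_mul]
      have hS0 : (0:ℝ) ≤ (S.card:ℝ) := Nat.cast_nonneg _
      have hT0 : (0:ℝ) ≤ (T.card:ℝ) := Nat.cast_nonneg _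
      linarith only [h2', hS0, hT0]
    · obtain ⟨C₀, hC₀, hIH⟩ := ih
      refine ⟨(b:ℝ) + 2 * (max C₀ 1) + 2, by positivity, ?_⟩
      intro α β _ _ S T G hG hdim
      have hIH' : ∀ (S : Finset α) (T : Finset β) (G : Finset (α × β)), G ⊆ S ×ˢ T →
          HasCombDim b k S T G →
          (G.card : ℝ) ≤ (max C₀ 1) * ((S.card : ℝ)
            + (S.card : ℝ) ^ (1 - 1/(k : ℝ)) * T.card) := by
        intro S' T'' G' h1 h2
        refine (hIH α β S' T'' G' h1 h2).trans ?_
        exact mul_le_mul_of_nonneg_right (le_max_left _ _) (by positivity)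
      have hmain := inductive_step b k hkpos (max C₀ 1) (le_max_right _ _) hIH' S T G hG hdim
      rw [show ((k+1:ℕ):ℝ) = (k:ℝ) + 1 by push_cast; ring]
      exact hmain
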